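/- Let (L, [·,…,·], ε, α, β) be a multiplicative n-BiHom-Lie color algebra. If D is an (αᵏ, βʳ)-derivation of degree d and D' an (αˡ, βˢ)-derivation of degree d', then their ε-commutator [D,D'] = D∘D' − ε(d,d') D'∘D is an (α^{k+l}, β^{r+s})-derivation of degree d+d'. -/

import Mathlib

open Finset TensorProduct

/-- An `n`-BiHom-Lie color algebra (with `n = arity = N+1`, so the structure parameter `N`
equals `n-1`): a `Γ`-graded `K`-vector space `L` with an even `(N+1)`-linear bracket,
a skew-symmetric bicharacter `ε`, and two even commuting linear maps `α, β` satisfying the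
`ε`-BiHom-skew-symmetry and the BiHom `ε`-Jacobi identity. -/
structure NBLCA (K : Type*) [Field K] (Γ : Type*) [AddCommGroup Γ] [DecidableEq Γ] (N : ℕ)
    (L : Type*) [AddCommGroup L] [Module K L] : Type _ where
  grading : Γ → Submodule K L
  internal : DirectSum.IsInternal grading
  ε : Γ → Γ → K
  α : L →ₗ[K] L
  β : L →ₗ[K] L
  bracket : MultilinearMap K (fun _ : Fin (N + 1) => L) L
  eps_ne : ∀ a b, ε a b ≠ 0
  eps_skew : ∀ a b, ε a b * ε b a = 1
  eps_add_right : ∀ a b c, ε a (b + c) = ε a b * ε a c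
  eps_add_left : ∀ a b c, ε (a + b) c = ε a c * ε b c
  α_even : ∀ (γ : Γ) (x : L), x ∈ grading γ → α x ∈ grading γ
  β_even : ∀ (γ : Γ) (x : L), x ∈ grading γ → β x ∈ grading γ
  αβ_comm : ∀ x, α (β x) = β (α x)
  bracket_grade : ∀ (d : Fin (N + 1) → Γ) (x : Fin (N + 1) → L),
    (∀ i, x i ∈ grading (d i)) → bracket x ∈ grading (∑ i, d i)
  skew : ∀ (d : Fin (N + 1) → Γ) (x : Fin (N + 1) → L), (∀ i, x i ∈ grading (d i)) →
    ∀ k : Fin N,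
      bracket (Fin.snoc (fun i : Fin N => β ((x ∘ Equiv.swap k.castSucc k.succ) i.castSucc))
          (α ((x ∘ Equiv.swap k.castSucc k.succ) (Fin.last N))))
        = (-(ε (d k.castSucc) (d k.succ))) •
          bracket (Fin.snoc (fun i : Fin N => β (x i.castSucc)) (α (x (Fin.last N))))
  jacobi : ∀ (dx : Fin N → Γ) (x : Fin N → L) (dy : Fin (N + 1) → Γ) (y : Fin (N + 1) → L),
    (∀ i, x i ∈ grading (dx i)) → (∀ i, y i ∈ grading (dy i)) →
    bracket (Fin.snoc (fun i : Fin N => β (β (x i)))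
        (bracket (Fin.snoc (fun i : Fin N => β (y i.castSucc)) (α (y (Fin.last N))))))
      = ∑ k : Fin (N + 1), ε (∑ i, dx i) (∑ l ∈ Finset.Iio k, dy l) •
          bracket (Function.update (fun i => β (β (y i))) k
            (bracket (Fin.snoc (fun i : Fin N => β (x i)) (α (y k)))))

namespace NBLCA

variable {K : Type*} [Field K] {Γ : Type*} [AddCommGroup Γ] [DecidableEq Γ] {N : ℕ}
  {L : Type*} [AddCommGroup L] [Module K L]

/-- `α` and `β` are morphisms for the bracket. -/
def IsMultiplicative (A : NBLCA K Γ N L) : Prop :=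
  (∀ x, A.α (A.bracket x) = A.bracket fun i => A.α (x i)) ∧
  (∀ x, A.β (A.bracket x) = A.bracket fun i => A.β (x i))

/-- A linear map homogeneous of degree `d`. -/
def HasDegree (A : NBLCA K Γ N L) (d : Γ) (D : L →ₗ[K] L) : Prop :=
  ∀ (γ : Γ) (x : L), x ∈ A.grading γ → D x ∈ A.grading (γ + d)

/-- A linear map commuting with the twisting maps `α` and `β`. -/
def CommutesTw (A : NBLCA K Γ N L) (D : L →ₗ[K] L) : Prop :=
  (∀ x, D (A.α x) = A.α (D x)) ∧ (∀ x, D (A.β x) = A.β (D x))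

/-- The twisting map `βʳ ∘ αᵏ`. -/
def tw (A : NBLCA K Γ N L) (k r : ℕ) : L →ₗ[K] L := (A.β ^ r) ∘ₗ (A.α ^ k)

/-- `(αᵏ, βʳ)`-derivation of degree `d`. -/
def IsDer (A : NBLCA K Γ N L) (k r : ℕ) (d : Γ) (D : L →ₗ[K] L) : Prop :=
  A.HasDegree d D ∧ A.CommutesTw D ∧
  ∀ (dx : Fin (N + 1) → Γ) (x : Fin (N + 1) → L), (∀ i, x i ∈ A.grading (dx i)) →
    D (A.bracket x) = ∑ i : Fin (N + 1), A.ε d (∑ l ∈ Finset.Iio i, dx l) •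
      A.bracket (Function.update (fun j => A.tw k r (x j)) i (D (x i)))

/-- `(αᵏ, βʳ)`-centroid elements of degree `d`. -/
def IsCent (A : NBLCA K Γ N L) (k r : ℕ) (d : Γ) (D : L →ₗ[K] L) : Prop :=
  A.HasDegree d D ∧ A.CommutesTw D ∧
  ∀ (i : Fin (N + 1)) (dx : Fin (N + 1) → Γ) (x : Fin (N + 1) → L),
    (∀ j, x j ∈ A.grading (dx j)) →
    D (A.bracket x) = A.ε d (∑ l ∈ Finset.Iio i, dx l) •
      A.bracket (Function.update (fun j => A.tw k r (x j)) i (D (x i)))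

/-- `(αᵏ, βʳ)`-quasicentroid elements of degree `d`. -/
def IsQC (A : NBLCA K Γ N L) (k r : ℕ) (d : Γ) (D : L →ₗ[K] L) : Prop :=
  A.HasDegree d D ∧ A.CommutesTw D ∧
  ∀ (i : Fin (N + 1)) (dx : Fin (N + 1) → Γ) (x : Fin (N + 1) → L),
    (∀ j, x j ∈ A.grading (dx j)) →
    A.bracket (Function.update (fun j => A.tw k r (x j)) 0 (D (x 0)))
      = A.ε d (∑ l ∈ Finset.Iio i, dx l) •
        A.bracket (Function.update (fun j => A.tw k r (x j)) i (D (x i)))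

/-- Central `(αᵏ, βʳ)`-derivation of degree `d`. -/
def IsZDer (A : NBLCA K Γ N L) (k r : ℕ) (d : Γ) (D : L →ₗ[K] L) : Prop :=
  A.HasDegree d D ∧ A.CommutesTw D ∧
  ∀ (dx : Fin (N + 1) → Γ) (x : Fin (N + 1) → L), (∀ i, x i ∈ A.grading (dx i)) →
    D (A.bracket x) = 0 ∧
    ∀ i : Fin (N + 1), A.ε d (∑ l ∈ Finset.Iio i, dx l) •
      A.bracket (Function.update (fun j => A.tw k r (x j)) i (D (x i))) = 0

/-- BiHom-ideal of an `n`-BiHom-Lie color algebra. -/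
def IsBiHomIdeal (A : NBLCA K Γ N L) (I : Submodule K L) : Prop :=
  (∀ x ∈ I, A.α x ∈ I) ∧ (∀ x ∈ I, A.β x ∈ I) ∧
  ∀ x : Fin (N + 1) → L, x 0 ∈ I → A.bracket x ∈ I

/-- The derived sequence `L₀ = L`, `Lₘ₊₁ = [Lₘ, …, Lₘ]`. -/
def derived (A : NBLCA K Γ N L) : ℕ → Submodule K L
  | 0 => ⊤
  | m + 1 => Submodule.span K
      {z | ∃ x : Fin (N + 1) → L, (∀ i, x i ∈ A.derived m) ∧ z = A.bracket x}

lemma alpha_pow_beta (A : NBLCA K Γ N L) (n : ℕ) (x : L) :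
    (A.α ^ n) (A.β x) = A.β ((A.α ^ n) x) := by
  induction n generalizing x with
  | zero => simp
  | succ n ih =>
      rw [pow_succ, Module.End.mul_apply, Module.End.mul_apply, A.αβ_comm, ih]

lemma alpha_pow_beta_pow (A : NBLCA K Γ N L) (n m : ℕ) (x : L) :
    (A.α ^ n) ((A.β ^ m) x) = (A.β ^ m) ((A.α ^ n) x) := by
  induction m generalizing x with
  | zero => simp
  | succ m ih =>
      rw [pow_succ, Module.End.mul_apply, Module.End.mul_apply, ih, alpha_pow_beta]

lemma tw_tw (A : NBLCA K Γ N L) (k r l s : ℕ) (x : L) :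
    A.tw k r (A.tw l s x) = A.tw (k + l) (r + s) x := by
  simp only [tw, LinearMap.coe_comp, Function.comp_apply, pow_add, Module.End.mul_apply]
  rw [alpha_pow_beta_pow]

lemma alpha_pow_grade (A : NBLCA K Γ N L) (n : ℕ) (γ : Γ) (x : L) (h : x ∈ A.grading γ) :
    (A.α ^ n) x ∈ A.grading γ := by
  induction n with
  | zero => simpa
  | succ n ih => rw [pow_succ', Module.End.mul_apply]; exact A.α_even γ _ ih

lemma beta_pow_grade (A : NBLCA K Γ N L) (n : ℕ) (γ : Γ) (x : L) (h : x ∈ A.grading γ) :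
    (A.β ^ n) x ∈ A.grading γ := by
  induction n with
  | zero => simpa
  | succ n ih => rw [pow_succ', Module.End.mul_apply]; exact A.β_even γ _ ih

lemma tw_grade (A : NBLCA K Γ N L) (k r : ℕ) (γ : Γ) (x : L) (h : x ∈ A.grading γ) :
    A.tw k r x ∈ A.grading γ :=
  A.beta_pow_grade r γ _ (A.alpha_pow_grade k γ x h)

lemma CommutesTw.tw_apply {A : NBLCA K Γ N L} {D : L →ₗ[K] L} (h : A.CommutesTw D)
    (k r : ℕ) (x : L) : D (A.tw k r x) = A.tw k r (D x) := by
  have ha : ∀ (n : ℕ) (y : L), D ((A.α ^ n) y) = (A.α ^ n) (D y) := by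
    intro n
    induction n with
    | zero => simp
    | succ n ih => intro y; rw [pow_succ, Module.End.mul_apply, Module.End.mul_apply, ih, h.1]
  have hb : ∀ (n : ℕ) (y : L), D ((A.β ^ n) y) = (A.β ^ n) (D y) := by
    intro n
    induction n with
    | zero => simp
    | succ n ih => intro y; rw [pow_succ, Module.End.mul_apply, Module.End.mul_apply, ih, h.2]
  simp only [tw, LinearMap.coe_comp, Function.comp_apply, ha, hb]

lemma sum_update_aux {ι : Type*} [DecidableEq ι] (s : Finset ι) (f : ι → Γ) (i : ι) (a : Γ) :
    ∑ m ∈ s, Function.update f i a m =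
      (∑ m ∈ s, f m) + (if i ∈ s then a - f i else 0) := by
  by_cases h : i ∈ s
  · rw [if_pos h, Finset.sum_update_of_mem h, ← Finset.sum_erase_add s f h,
      ← Finset.sdiff_singleton_eq_erase]
    abel
  · rw [if_neg h, add_zero]
    exact Finset.sum_congr rfl fun m hm => Function.update_of_ne (ne_of_mem_of_not_mem hm h) _ _

end NBLCA

/-- The `ε`-commutator of an `(αᵏ,βʳ)`-derivation of degree `d` and an `(αˡ,βˢ)`-derivation
of degree `d'` is an `(α^{k+l},β^{r+s})`-derivation of degree `d+d'`. -/
theorem commutator_isDer {K : Type*} [Field K] {Γ : Type*} [AddCommGroup Γ] [DecidableEq Γ]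
    {N : ℕ} {L : Type*} [AddCommGroup L] [Module K L]
    (A : NBLCA K Γ N L) (hmul : A.IsMultiplicative)
    (k r l s : ℕ) (d d' : Γ) (D D' : L →ₗ[K] L)
    (hD : A.IsDer k r d D) (hD' : A.IsDer l s d' D') :
    A.IsDer (k + l) (r + s) (d + d') (D ∘ₗ D' - A.ε d d' • (D' ∘ₗ D)) := by
  obtain ⟨hDdeg, hDcomm, hDbr⟩ := hD
  obtain ⟨hD'deg, hD'comm, hD'br⟩ := hD'
  refine ⟨?_, ⟨?_, ?_⟩, ?_⟩
  · intro γ x hx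
    simp only [LinearMap.sub_apply, LinearMap.comp_apply, LinearMap.smul_apply]
    refine Submodule.sub_mem _ ?_ (Submodule.smul_mem _ _ ?_)
    · have h := hDdeg _ _ (hD'deg γ x hx)
      rwa [add_assoc, add_comm d' d] at h
    · have h := hD'deg _ _ (hDdeg γ x hx)
      rwa [add_assoc] at h
  · intro x
    simp only [LinearMap.sub_apply, LinearMap.comp_apply, LinearMap.smul_apply, map_sub,
      map_smul, hDcomm.1, hDcomm.2, hD'comm.1, hD'comm.2]
  · intro x
    simp only [LinearMap.sub_apply, LinearMap.comp_apply, LinearMap.smul_apply, map_sub,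
      map_smul, hDcomm.1, hDcomm.2, hD'comm.1, hD'comm.2]
  · intro dx x hx
    classical
    have hy : ∀ i : Fin (N + 1), ∀ j : Fin (N + 1),
        Function.update (fun m => A.tw l s (x m)) i (D' (x i)) j
          ∈ A.grading (Function.update dx i (dx i + d') j) := by
      intro i j
      rcases eq_or_ne j i with rfl | hji
      · simpa using hD'deg _ _ (hx j)
      · rw [Function.update_of_ne hji, Function.update_of_ne hji]
        exact A.tw_grade _ _ _ _ (hx j)
    have hz : ∀ j : Fin (N + 1), ∀ i : Fin (N + 1),
        Function.update (fun m => A.tw k r (x m)) j (D (x j)) i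
          ∈ A.grading (Function.update dx j (dx j + d) i) := by
      intro j i
      rcases eq_or_ne i j with rfl | hij
      · simpa using hDdeg _ _ (hx i)
      · rw [Function.update_of_ne hij, Function.update_of_ne hij]
        exact A.tw_grade _ _ _ _ (hx i)
    have htupD : ∀ i : Fin (N + 1),
        (fun m => A.tw k r (Function.update (fun m' => A.tw l s (x m')) i (D' (x i)) m))
          = Function.update (fun m => A.tw (k + l) (r + s) (x m)) i (A.tw k r (D' (x i))) := by
      intro i; funext m
      rcases eq_or_ne m i with rfl | h
      · simp
      · rw [Function.update_of_ne h, Function.update_of_ne h, A.tw_tw]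
    have hvalD : ∀ i j : Fin (N + 1),
        D (Function.update (fun m' => A.tw l s (x m')) i (D' (x i)) j)
          = Function.update (fun m => A.tw l s (D (x m))) i (D (D' (x i))) j := by
      intro i j
      rcases eq_or_ne j i with rfl | h
      · simp
      · rw [Function.update_of_ne h, Function.update_of_ne h, hDcomm.tw_apply]
    have htupD' : ∀ j : Fin (N + 1),
        (fun m => A.tw l s (Function.update (fun m' => A.tw k r (x m')) j (D (x j)) m))
          = Function.update (fun m => A.tw (k + l) (r + s) (x m)) j (A.tw l s (D (x j))) := by
      intro j; funext m
      rcases eq_or_ne m j with rfl | h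
      · simp
      · rw [Function.update_of_ne h, Function.update_of_ne h, A.tw_tw,
          Nat.add_comm l k, Nat.add_comm s r]
    have hvalD' : ∀ j i : Fin (N + 1),
        D' (Function.update (fun m' => A.tw k r (x m')) j (D (x j)) i)
          = Function.update (fun m => A.tw k r (D' (x m))) j (D' (D (x j))) i := by
      intro j i
      rcases eq_or_ne i j with rfl | h
      · simp
      · rw [Function.update_of_ne h, Function.update_of_ne h, hD'comm.tw_apply]
    have hW : ∀ (i j : Fin (N + 1)) (c : Γ),
        (∑ m ∈ Finset.Iio j, Function.update dx i (dx i + c) m)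
          = (∑ m ∈ Finset.Iio j, dx m) + (if i < j then c else 0) := by
      intro i j c
      rw [NBLCA.sum_update_aux]
      congr 1
      by_cases h : i < j
      · rw [if_pos (Finset.mem_Iio.mpr h), if_pos h, add_sub_cancel_left]
      · rw [if_neg (fun hm => h (Finset.mem_Iio.mp hm)), if_neg h]
    have key1 : D (D' (A.bracket x)) = ∑ i : Fin (N + 1), ∑ j : Fin (N + 1),
        (A.ε d' (∑ m ∈ Finset.Iio i, dx m)
          * A.ε d (∑ m ∈ Finset.Iio j, Function.update dx i (dx i + d') m)) •
        A.bracket (Function.update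
          (Function.update (fun m => A.tw (k + l) (r + s) (x m)) i (A.tw k r (D' (x i)))) j
          (Function.update (fun m => A.tw l s (D (x m))) i (D (D' (x i))) j)) := by
      rw [hD'br dx x hx, map_sum]
      refine Finset.sum_congr rfl fun i _ => ?_
      rw [map_smul, hDbr _ _ (hy i), Finset.smul_sum]
      refine Finset.sum_congr rfl fun j _ => ?_
      rw [smul_smul, htupD i, hvalD i j]
    have key2 : D' (D (A.bracket x)) = ∑ i : Fin (N + 1), ∑ j : Fin (N + 1),
        (A.ε d (∑ m ∈ Finset.Iio j, dx m)
          * A.ε d' (∑ m ∈ Finset.Iio i, Function.update dx j (dx j + d) m)) •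
        A.bracket (Function.update
          (Function.update (fun m => A.tw (k + l) (r + s) (x m)) j (A.tw l s (D (x j)))) i
          (Function.update (fun m => A.tw k r (D' (x m))) j (D' (D (x j))) i)) := by
      rw [Finset.sum_comm, hDbr dx x hx, map_sum]
      refine Finset.sum_congr rfl fun j _ => ?_
      rw [map_smul, hD'br _ _ (hz j), Finset.smul_sum]
      refine Finset.sum_congr rfl fun i _ => ?_
      rw [smul_smul, htupD' j, hvalD' j i]
    simp only [LinearMap.sub_apply, LinearMap.comp_apply, LinearMap.smul_apply]
    rw [key1, key2]
    simp only [Finset.smul_sum]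
    rw [← Finset.sum_sub_distrib]
    refine Finset.sum_congr rfl fun i _ => ?_
    rw [← Finset.sum_sub_distrib]
    refine (Fintype.sum_eq_single i ?_).trans ?_
    · intro j hji
      rw [sub_eq_zero, Function.update_of_ne hji, Function.update_of_ne hji.symm,
        Function.update_comm hji.symm, smul_smul, hW, hW]
      congr 1
      rcases lt_or_gt_of_ne hji with h | h
      · -- j < i
        rw [if_neg (asymm h), if_pos h, add_zero, A.eps_add_right]
        linear_combination (-(A.ε d (∑ m ∈ Finset.Iio j, dx m)
            * A.ε d' (∑ m ∈ Finset.Iio i, dx m))) * A.eps_skew d' d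
      · -- i < j
        rw [if_pos h, if_neg (asymm h), add_zero, A.eps_add_right]
        ring
    · rw [Function.update_self, Function.update_self, Function.update_idem,
        Function.update_idem, hW, hW, if_neg (lt_irrefl i), add_zero, if_neg (lt_irrefl i), add_zero]
      rw [MultilinearMap.map_update_sub, MultilinearMap.map_update_smul, A.eps_add_left]
      module
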